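/- Let ⟨W,D⟩ be a default theory in which no justification of any default is relevant (formally: for every candidate set E arising in the construction and every default (α,β,γ) ∈ D, ¬β ∉ E). Define the monotone iteration G₀ = W and G_{i+1} = G_i ∪ {γ | (α,β,γ) ∈ D, G_i ⊨ α}. Since D is finite, there is k with G_k = G_{k+1}, and Th(G_k) is a stable extension of ⟨W,D⟩; moreover it is the unique stable extension whose negated justifications are never derivable. -/
import Mathlib


inductive Form : Type where
  | var : ℕ → Form
  | app : (n : ℕ) → ((Fin n → Bool) → Bool) → (Fin n → Form) → Form

namespace Form

def eval (σ : ℕ → Bool) : Form → Bool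
  | var x => σ x
  | app _ f a => f (fun i => (a i).eval σ)

def tru : Form := app 0 (fun _ => true) (fun i => i.elim0)
def fls : Form := app 0 (fun _ => false) (fun i => i.elim0)
def neg (φ : Form) : Form := app 1 (fun v => !(v 0)) (fun _ => φ)
def conj (φ ψ : Form) : Form := app 2 (fun v => v 0 && v 1) ![φ, ψ]
def disj (φ ψ : Form) : Form := app 2 (fun v => v 0 || v 1) ![φ, ψ]

end Form

/-- σ satisfies all formulae of A. -/
def Sat (σ : ℕ → Bool) (A : Set Form) : Prop := ∀ φ ∈ A, φ.eval σ = true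

/-- Semantic consequence A ⊨ φ. -/
def Entails (A : Set Form) (φ : Form) : Prop := ∀ σ, Sat σ A → φ.eval σ = true

/-- Th(A) = {φ | A ⊨ φ}. -/
def Th (A : Set Form) : Set Form := {φ | Entails A φ}

def Consistent (A : Set Form) : Prop := ∃ σ, Sat σ A

/-- A default rule (α : β / γ). -/
structure Default where
  pre : Form
  just : Form
  con : Form

/-- S contains W, is deductively closed, and closed under defaults applicable w.r.t. E. -/
def GammaClosed (W : Set Form) (D : Set Default) (E S : Set Form) : Prop :=
  W ⊆ S ∧ Th S = S ∧ ∀ d ∈ D, d.pre ∈ S → Form.neg d.just ∉ E → d.con ∈ S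

/-- Γ(E): the smallest set satisfying the three closure conditions. -/
def Gamma (W : Set Form) (D : Set Default) (E : Set Form) : Set Form :=
  ⋂₀ {S | GammaClosed W D E S}

/-- E is a stable extension of ⟨W,D⟩. -/
def Stable (W : Set Form) (D : Set Default) (E : Set Form) : Prop :=
  Gamma W D E = E


lemma subset_th (A : Set Form) : A ⊆ Th A := fun φ hφ σ hσ => hσ φ hφ

lemma th_mono {A B : Set Form} (h : A ⊆ B) : Th A ⊆ Th B :=
  fun φ hφ σ hσ => hφ σ (fun ψ hψ => hσ ψ (h hψ))

lemma th_th (A : Set Form) : Th (Th A) = Th A := by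
  apply Set.Subset.antisymm _ (subset_th _)
  intro φ hφ σ hσ
  exact hφ σ (fun ψ hψ => hψ σ hσ)

lemma gammaClosed_gamma (W : Set Form) (D : Set Default) (E : Set Form) :
    GammaClosed W D E (Gamma W D E) := by
  refine ⟨Set.subset_sInter fun S hS => hS.1, ?_, ?_⟩
  · apply Set.Subset.antisymm _ (subset_th _)
    intro φ hφ
    exact fun S hS => hS.2.1 ▸ th_mono (Set.sInter_subset_of_mem hS) hφ
  · intro d hd hpre hne S hS
    exact hS.2.2 d hd (hpre S hS) hne

lemma gamma_subset {W : Set Form} {D : Set Default} {E S : Set Form}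
    (h : GammaClosed W D E S) : Gamma W D E ⊆ S :=
  Set.sInter_subset_of_mem h

/-- When no justification is ever blocked, the monotone iteration
G₀ = W, G_{i+1} = G_i ∪ {γ | (α,β,γ) ∈ D, G_i ⊨ α} stabilizes, its deductive
closure is a stable extension, and it is the unique stable extension whose
negated justifications are never derivable. -/
theorem stmt19 (W : Set Form) (D : Set Default) (hD : D.Finite)
    (G : ℕ → Set Form) (hG0 : G 0 = W)
    (hGs : ∀ i, G (i + 1) = G i ∪ {γ | ∃ d ∈ D, Entails (G i) d.pre ∧ d.con = γ})
    (hJ : ∀ d ∈ D, Form.neg d.just ∉ Th (⋃ i, G i)) :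
    (∃ k, G k = G (k + 1)) ∧
    ∀ k, G k = G (k + 1) →
      Stable W D (Th (G k)) ∧
      ∀ E : Set Form, Stable W D E → (∀ d ∈ D, Form.neg d.just ∉ E) →
        E = Th (G k) := by
  have hmono : ∀ i, G i ⊆ G (i + 1) := fun i => by
    rw [hGs i]; exact Set.subset_union_left
  have hmono' : ∀ i j, i ≤ j → G i ⊆ G j := by
    intro i j hij
    induction j with
    | zero => simpa [Nat.le_zero.mp hij] using subset_rfl
    | succ n ih =>
      rcases Nat.le_succ_iff.mp hij with h | h
      · exact (ih h).trans (hmono n)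
      · exact h ▸ subset_rfl
  constructor
  · -- stabilization
    by_contra h
    push_neg at h
    set C : Set Form := (fun d => d.con) '' D with hC
    have hCfin : C.Finite := hD.image _
    have hstep : ∀ i, (G i ∩ C) ⊂ (G (i + 1) ∩ C) := by
      intro i
      refine ⟨Set.inter_subset_inter_left _ (hmono i), fun hsub => ?_⟩
      have hne : ¬ G (i + 1) ⊆ G i := fun hs => h i (Set.Subset.antisymm (hmono i) hs)
      rcases Set.not_subset.mp hne with ⟨x, hx1, hx0⟩
      have hxC : x ∈ C := by
        rw [hGs i] at hx1
        rcases hx1 with hx1 | hx1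
        · exact absurd hx1 hx0
        · rcases hx1 with ⟨d, hd, _, hcon⟩
          exact ⟨d, hd, hcon⟩
      exact hx0 (hsub ⟨hx1, hxC⟩).1
    have hsm : StrictMono (fun i => (G i ∩ C).ncard) := by
      apply strictMono_nat_of_lt_succ
      intro i
      exact Set.ncard_lt_ncard (hstep i) (hCfin.inter_of_right _)
    have hle : ∀ i, (G i ∩ C).ncard ≤ C.ncard :=
      fun i => Set.ncard_le_ncard Set.inter_subset_right hCfin
    have h2 : C.ncard + 1 ≤ (G (C.ncard + 1) ∩ C).ncard := hsm.le_apply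
    have := hle (C.ncard + 1)
    omega
  · intro k hk
    have hconst : ∀ j, G (k + j) = G k := by
      intro j
      induction j with
      | zero => rfl
      | succ n ih => rw [show k + (n + 1) = (k + n) + 1 from rfl, hGs, ih, ← hGs, ← hk]
    have hall : ∀ i, G i ⊆ G k := by
      intro i
      rcases le_or_gt i k with h | h
      · exact hmono' i k h
      · have : G i = G k := by
          have := hconst (i - k)
          rwa [Nat.add_sub_cancel' h.le] at this
        exact this ▸ subset_rfl
    have hUnion : (⋃ i, G i) = G k :=
      Set.Subset.antisymm (Set.iUnion_subset hall) (Set.subset_iUnion G k)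
    rw [hUnion] at hJ
    -- Th (G k) is GammaClosed w.r.t. any E'
    have hclosed : ∀ E' : Set Form, GammaClosed W D E' (Th (G k)) := by
      intro E'
      refine ⟨hG0 ▸ (subset_th (G 0)).trans (th_mono (hall 0)), th_th _, ?_⟩
      intro d hd hpre _
      have : d.con ∈ G (k + 1) := by
        rw [hGs]; exact Or.inr ⟨d, hd, hpre, rfl⟩
      exact subset_th _ (hk ▸ this)
    -- if E' never blocks justifications and S is GammaClosed w.r.t. E', then Th (G k) ⊆ S
    have hleast : ∀ E' S : Set Form, (∀ d ∈ D, Form.neg d.just ∉ E') →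
        GammaClosed W D E' S → Th (G k) ⊆ S := by
      intro E' S hE' hS
      have hGi : ∀ i, G i ⊆ S := by
        intro i
        induction i with
        | zero => exact hG0 ▸ hS.1
        | succ n ih =>
          rw [hGs]
          rintro x (hx | ⟨d, hd, hpre, hcon⟩)
          · exact ih hx
          · have hpreS : d.pre ∈ S := by
              rw [← hS.2.1]
              exact fun σ hσ => hpre σ (fun ψ hψ => hσ ψ (ih hψ))
            exact hcon ▸ hS.2.2 d hd hpreS (hE' d hd)
      exact hS.2.1 ▸ th_mono (hGi k)
    constructor
    · apply Set.Subset.antisymm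
      · exact gamma_subset (hclosed (Th (G k)))
      · exact Set.subset_sInter fun S hS => hleast (Th (G k)) S hJ hS
    · intro E hE hEJ
      apply Set.Subset.antisymm
      · rw [← hE]
        exact gamma_subset (hclosed E)
      · have hEc : GammaClosed W D E E := by
          have := gammaClosed_gamma W D E
          rwa [hE] at this
        exact hleast E E hEJ hEc
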